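/- With the polynomial Kreweras triangle (K_{n,k}) and the integer Kreweras triangle (h_{n,k}) defined by their respective recurrences, for all n ≥ 1 and 1 ≤ k ≤ n, the polynomial K_{n,k} has degree n, is monic, has constant coefficient 0, and its coefficient of x equals (-1)^{n-1} h_{n,k}. -/

import Mathlib

open Polynomial

private lemma monic_add_small' {p q : Polynomial ℤ} {n : ℕ}
    (hp : p.Monic) (hd : p.degree = (n : WithBot ℕ)) (hq : q.degree < (n : WithBot ℕ)) :
    (p + q).degree = (n : WithBot ℕ) ∧ (p + q).Monic := by
  constructor
  · rw [Polynomial.degree_add_eq_left_of_degree_lt (by rw [hd]; exact hq), hd]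
  · exact hp.add_of_left (by rw [hd]; exact hq)

private lemma coeff_two_mul' (p : Polynomial ℤ) (i : ℕ) :
    ((2:Polynomial ℤ) * p).coeff i = 2 * p.coeff i := by
  rw [show (2:Polynomial ℤ) = C 2 by norm_num, Polynomial.coeff_C_mul]

theorem polyKreweras_shape (K : ℕ → ℕ → Polynomial ℤ) (h : ℕ → ℕ → ℤ)
    (hK01 : K 0 1 = 1)
    (hK11 : K 1 1 = X)
    (hKrec1 : ∀ n, 2 ≤ n → K n 1 = (X - 1) * K (n - 1) 1 - ∑ i ∈ Finset.Icc 2 (n - 1), K (n - 1) i)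
    (hKrec2 : ∀ n, 2 ≤ n → K n 2 = 2 * K n 1 + K (n - 1) 1 - X ^ 2 * K (n - 2) 1)
    (hKreck : ∀ n k, 3 ≤ k → k ≤ n →
      K n k = 2 * K n (k - 1) - K n (k - 2) + K (n - 1) (k - 1) + K (n - 1) (k - 2)
        + 2 * X * K (n - 2) (k - 2))
    (h11 : h 1 1 = 1)
    (hrec1 : ∀ n, 2 ≤ n → h n 1 = ∑ i ∈ Finset.Icc 1 (n - 1), h (n - 1) i)
    (hrec2 : ∀ n, 2 ≤ n → h n 2 = 2 * h n 1 - h (n - 1) 1)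
    (hreck : ∀ n k, 3 ≤ k → k ≤ n →
      h n k = 2 * h n (k - 1) - h n (k - 2) - h (n - 1) (k - 1) - h (n - 1) (k - 2)) :
    ∀ n k, 1 ≤ k → k ≤ n →
      (K n k).degree = n ∧ (K n k).Monic ∧ (K n k).coeff 0 = 0 ∧
      (K n k).coeff 1 = (-1) ^ (n - 1) * h n k := by
  intro n
  induction n using Nat.strong_induction_on with
  | _ n ih =>
  intro k
  induction k using Nat.strong_induction_on with
  | _ k ihk =>
  intro hk1 hkn
  rcases Nat.lt_or_ge n 3 with hn | hn
  · interval_cases n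
    · omega
    · -- n = 1, k = 1
      interval_cases k
      refine ⟨?_, ?_, ?_, ?_⟩ <;> simp [hK11, h11]
    · -- n = 2
      have e1 : K 2 1 = X ^ 2 - X := by
        rw [hKrec1 2 le_rfl]
        norm_num [hK11]
        ring
      have h21 : h 2 1 = 1 := by
        rw [hrec1 2 le_rfl]; simp [h11]
      interval_cases k
      · rw [e1]
        refine ⟨?_, ?_, ?_, ?_⟩
        · compute_degree!
        · monicity!
        · simp
        · simp [h21]
      · have e2 : K 2 2 = X ^ 2 - X := by
          rw [hKrec2 2 le_rfl]
          norm_num [e1, hK11, hK01]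
          ring
        have h22 : h 2 2 = 1 := by
          have := hrec2 2 le_rfl
          norm_num [h21, h11] at this
          omega
        rw [e2]
        refine ⟨?_, ?_, ?_, ?_⟩
        · compute_degree!
        · monicity!
        · simp
        · simp [h22]
  · -- 3 ≤ n
    obtain ⟨m, rfl⟩ : ∃ m, n = m + 3 := ⟨n - 3, by omega⟩
    have sign : ((-1 : ℤ)) ^ (m + 2) = -(-1 : ℤ) ^ (m + 1) := by
      rw [pow_succ]; ring
    simp only [show m + 3 - 1 = m + 2 from rfl]
    rcases Nat.lt_or_ge k 3 with hk3 | hk3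
    · interval_cases k
      · -- k = 1
        obtain ⟨hpd, hpm, hp0, hp1⟩ := ih (m+2) (by omega) 1 le_rfl (by omega)
        replace hp1 : (K (m+2) 1).coeff 1 = (-1 : ℤ) ^ (m+1) * h (m+2) 1 := hp1
        have hterm : ∀ i ∈ Finset.Icc 2 (m+2),
            (K (m+2) i).degree = ((m+2 : ℕ) : WithBot ℕ) ∧ (K (m+2) i).coeff 0 = 0 ∧
            (K (m+2) i).coeff 1 = (-1 : ℤ) ^ (m+1) * h (m+2) i := by
          intro i hi
          simp only [Finset.mem_Icc] at hi
          obtain ⟨hd, _, h0, h1⟩ := ih (m+2) (by omega) i (by omega) (by omega)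
          exact ⟨hd, h0, h1⟩
        have hrw : K (m+3) 1
            = (X - 1) * K (m+2) 1 - ∑ i ∈ Finset.Icc 2 (m+2), K (m+2) i :=
          hKrec1 (m+3) (by omega)
        have hSd : (∑ i ∈ Finset.Icc 2 (m+2), K (m+2) i).degree
            < ((m+3 : ℕ) : WithBot ℕ) := by
          apply lt_of_le_of_lt (Polynomial.degree_sum_le _ _)
          rw [Finset.sup_lt_iff (by exact WithBot.bot_lt_coe _)]
          intro i hi
          rw [(hterm i hi).1]
          exact_mod_cast (by omega : m + 2 < m + 3)
        have hS0 : (∑ i ∈ Finset.Icc 2 (m+2), K (m+2) i).coeff 0 = 0 := by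
          rw [Polynomial.finset_sum_coeff]
          exact Finset.sum_eq_zero fun i hi => (hterm i hi).2.1
        have hS1 : (∑ i ∈ Finset.Icc 2 (m+2), K (m+2) i).coeff 1
            = ∑ i ∈ Finset.Icc 2 (m+2), (-1 : ℤ) ^ (m+1) * h (m+2) i := by
          rw [Polynomial.finset_sum_coeff]
          exact Finset.sum_congr rfl fun i hi => (hterm i hi).2.2
        have hX1 : (X - (1 : Polynomial ℤ)) = X - C 1 := by rw [C_1]
        have hmul : ((X - 1) * K (m+2) 1).Monic := by
          rw [hX1]; exact (monic_X_sub_C 1).mul hpm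
        have hmuld : ((X - 1) * K (m+2) 1).degree = ((m+3 : ℕ) : WithBot ℕ) := by
          rw [Polynomial.degree_mul, hpd, hX1, Polynomial.degree_X_sub_C]
          norm_cast
          omega
        have key := monic_add_small' hmul hmuld
          (q := -(∑ i ∈ Finset.Icc 2 (m+2), K (m+2) i))
          (by rwa [Polynomial.degree_neg])
        rw [hrw, sub_eq_add_neg]
        refine ⟨key.1, key.2, ?_, ?_⟩
        · rw [Polynomial.coeff_add, Polynomial.coeff_neg, hS0, Polynomial.mul_coeff_zero, hp0]
          ring
        · rw [Polynomial.coeff_add, Polynomial.coeff_neg, hS1, sub_mul, one_mul,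
            Polynomial.coeff_sub, Polynomial.coeff_X_mul, hp0, hp1]
          have hh : h (m+3) 1 = ∑ i ∈ Finset.Icc 1 (m+2), h (m+2) i := hrec1 (m+3) (by omega)
          have hins : Finset.Icc 1 (m+2) = insert 1 (Finset.Icc 2 (m+2)) := by
            ext x; simp only [Finset.mem_Icc, Finset.mem_insert]; omega
          rw [hins, Finset.sum_insert (by simp)] at hh
          rw [hh, ← Finset.mul_sum, sign]
          ring
      · -- k = 2
        obtain ⟨hAd, hAm, hA0, hA1⟩ := ihk 1 (by omega) le_rfl (by omega)
        replace hA1 : (K (m+3) 1).coeff 1 = (-1 : ℤ) ^ (m+2) * h (m+3) 1 := hA1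
        obtain ⟨hBd, hBm, hB0, hB1⟩ := ih (m+2) (by omega) 1 le_rfl (by omega)
        replace hB1 : (K (m+2) 1).coeff 1 = (-1 : ℤ) ^ (m+1) * h (m+2) 1 := hB1
        obtain ⟨hCd, hCm, hC0, hC1⟩ := ih (m+1) (by omega) 1 le_rfl (by omega)
        have hrw : K (m+3) 2 = 2 * K (m+3) 1 + K (m+2) 1 - X ^ 2 * K (m+1) 1 :=
          hKrec2 (m+3) (by omega)
        have hXC : (X ^ 2 * K (m+1) 1).Monic := (monic_X_pow 2).mul hCm
        have hXCd : (X ^ 2 * K (m+1) 1).degree = ((m+3 : ℕ) : WithBot ℕ) := by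
          rw [Polynomial.degree_mul, Polynomial.degree_X_pow, hCd]
          norm_cast
          omega
        have hsub : (K (m+3) 1 - X ^ 2 * K (m+1) 1).degree < ((m+3 : ℕ) : WithBot ℕ) := by
          have := Polynomial.degree_sub_lt (hAd.trans hXCd.symm) hAm.ne_zero
            (by rw [hAm.leadingCoeff, hXC.leadingCoeff])
          rwa [hAd] at this
        have hq : ((K (m+3) 1 - X ^ 2 * K (m+1) 1) + K (m+2) 1).degree
            < ((m+3 : ℕ) : WithBot ℕ) :=
          lt_of_le_of_lt (Polynomial.degree_add_le _ _)
            (max_lt hsub (by rw [hBd]; exact_mod_cast (by omega : m + 2 < m + 3)))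
        have key := monic_add_small' hAm hAd hq
        have e : 2 * K (m+3) 1 + K (m+2) 1 - X ^ 2 * K (m+1) 1
            = K (m+3) 1 + ((K (m+3) 1 - X ^ 2 * K (m+1) 1) + K (m+2) 1) := by ring
        rw [hrw, e]
        have hX2C0 : (X ^ 2 * K (m+1) 1).coeff 0 = 0 := by
          rw [Polynomial.mul_coeff_zero, hC0, mul_zero]
        have hX2C1 : (X ^ 2 * K (m+1) 1).coeff 1 = 0 := by
          rw [pow_two, mul_assoc, Polynomial.coeff_X_mul, Polynomial.mul_coeff_zero,
            Polynomial.coeff_X_zero, zero_mul]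
        refine ⟨key.1, key.2, ?_, ?_⟩
        · rw [Polynomial.coeff_add, Polynomial.coeff_add, Polynomial.coeff_sub,
            hA0, hB0, hX2C0]
          ring
        · rw [Polynomial.coeff_add, Polynomial.coeff_add, Polynomial.coeff_sub,
            hA1, hB1, hX2C1]
          have hh : h (m+3) 2 = 2 * h (m+3) 1 - h (m+2) 1 := hrec2 (m+3) (by omega)
          rw [hh, sign]
          ring
    · -- 3 ≤ k
      obtain ⟨j, rfl⟩ : ∃ j, k = j + 3 := ⟨k - 3, by omega⟩
      obtain ⟨hAd, hAm, hA0, hA1⟩ := ihk (j+2) (by omega) (by omega) (by omega)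
      obtain ⟨hBd, hBm, hB0, hB1⟩ := ihk (j+1) (by omega) (by omega) (by omega)
      obtain ⟨hCd, hCm, hC0, hC1⟩ := ih (m+2) (by omega) (j+2) (by omega) (by omega)
      obtain ⟨hDd, hDm, hD0, hD1⟩ := ih (m+2) (by omega) (j+1) (by omega) (by omega)
      obtain ⟨hEd, hEm, hE0, hE1⟩ := ih (m+1) (by omega) (j+1) (by omega) (by omega)
      replace hA1 : (K (m+3) (j+2)).coeff 1 = (-1 : ℤ) ^ (m+2) * h (m+3) (j+2) := hA1
      replace hB1 : (K (m+3) (j+1)).coeff 1 = (-1 : ℤ) ^ (m+2) * h (m+3) (j+1) := hB1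
      replace hC1 : (K (m+2) (j+2)).coeff 1 = (-1 : ℤ) ^ (m+1) * h (m+2) (j+2) := hC1
      replace hD1 : (K (m+2) (j+1)).coeff 1 = (-1 : ℤ) ^ (m+1) * h (m+2) (j+1) := hD1
      have hrw : K (m+3) (j+3)
          = 2 * K (m+3) (j+2) - K (m+3) (j+1) + K (m+2) (j+2) + K (m+2) (j+1)
            + 2 * X * K (m+1) (j+1) :=
        hKreck (m+3) (j+3) (by omega) hkn
      have hsub : (K (m+3) (j+2) - K (m+3) (j+1)).degree < ((m+3 : ℕ) : WithBot ℕ) := by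
        have := Polynomial.degree_sub_lt (hAd.trans hBd.symm) hAm.ne_zero
          (by rw [hAm.leadingCoeff, hBm.leadingCoeff])
        rwa [hAd] at this
      have hXE : ((X : Polynomial ℤ) * K (m+1) (j+1)).degree = ((m+2 : ℕ) : WithBot ℕ) := by
        rw [Polynomial.degree_mul, Polynomial.degree_X, hEd]
        norm_cast
        omega
      have h2XE : ((2 : Polynomial ℤ) * X * K (m+1) (j+1)).degree
          ≤ ((m+2 : ℕ) : WithBot ℕ) := by
        have e2 : (2 : Polynomial ℤ) * X * K (m+1) (j+1)
            = X * K (m+1) (j+1) + X * K (m+1) (j+1) := by ring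
        rw [e2]
        exact le_trans (Polynomial.degree_add_le _ _) (by rw [hXE]; simp)
      have hq : (((K (m+3) (j+2) - K (m+3) (j+1)) + K (m+2) (j+2) + K (m+2) (j+1)
          + 2 * X * K (m+1) (j+1))).degree < ((m+3 : ℕ) : WithBot ℕ) := by
        refine lt_of_le_of_lt (Polynomial.degree_add_le _ _)
          (max_lt ?_ (lt_of_le_of_lt h2XE (by exact_mod_cast (by omega : m + 2 < m + 3))))
        refine lt_of_le_of_lt (Polynomial.degree_add_le _ _)
          (max_lt ?_ (by rw [hDd]; exact_mod_cast (by omega : m + 2 < m + 3)))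
        exact lt_of_le_of_lt (Polynomial.degree_add_le _ _)
          (max_lt hsub (by rw [hCd]; exact_mod_cast (by omega : m + 2 < m + 3)))
      have key := monic_add_small' hAm hAd hq
      have e : 2 * K (m+3) (j+2) - K (m+3) (j+1) + K (m+2) (j+2) + K (m+2) (j+1)
            + 2 * X * K (m+1) (j+1)
          = K (m+3) (j+2) + ((K (m+3) (j+2) - K (m+3) (j+1)) + K (m+2) (j+2)
            + K (m+2) (j+1) + 2 * X * K (m+1) (j+1)) := by ring
      rw [hrw, e]
      have h2XE0 : ((2 : Polynomial ℤ) * X * K (m+1) (j+1)).coeff 0 = 0 := by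
        rw [Polynomial.mul_coeff_zero, hE0, mul_zero]
      have h2XE1 : ((2 : Polynomial ℤ) * X * K (m+1) (j+1)).coeff 1 = 0 := by
        rw [mul_assoc, coeff_two_mul', Polynomial.coeff_X_mul, hE0, mul_zero]
      refine ⟨key.1, key.2, ?_, ?_⟩
      · rw [Polynomial.coeff_add, Polynomial.coeff_add, Polynomial.coeff_add,
          Polynomial.coeff_add, Polynomial.coeff_sub, hA0, hB0, hC0, hD0, h2XE0]
        ring
      · rw [Polynomial.coeff_add, Polynomial.coeff_add, Polynomial.coeff_add,
          Polynomial.coeff_add, Polynomial.coeff_sub, hA1, hB1, hC1, hD1, h2XE1]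
        have hh : h (m+3) (j+3)
            = 2 * h (m+3) (j+2) - h (m+3) (j+1) - h (m+2) (j+2) - h (m+2) (j+1) :=
          hreck (m+3) (j+3) (by omega) hkn
        rw [hh, sign]
        ring
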